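/- For an integer s ≥ 2 and a rational ρ with 0 < ρ < 1/(s−1), there exists a strictly balanced s-uniform hypergraph with density ρ if and only if ρ = k/(1 + k(s−1)) for some positive integer k. -/

import Mathlib

open scoped Classical

/-- A finite `s`-uniform hypergraph on a vertex set of natural numbers. -/
structure SUnifHypergraph (s : ℕ) where
  V : Finset ℕ
  E : Finset (Finset ℕ)
  card_edges : ∀ e ∈ E, e.card = s
  edges_sub : ∀ e ∈ E, e ⊆ V

namespace SUnifHypergraph

/-- The density `|E|/|V|` of a hypergraph. -/
noncomputable def density {s : ℕ} (G : SUnifHypergraph s) : ℚ :=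
  (G.E.card : ℚ) / (G.V.card : ℚ)

/-- `G` is strictly balanced: every proper subhypergraph with at least one
vertex has strictly smaller density. -/
def StrictlyBalanced {s : ℕ} (G : SUnifHypergraph s) : Prop :=
  G.V.Nonempty ∧ ∀ H : SUnifHypergraph s, H.V ⊆ G.V → H.E ⊆ G.E → H.V.Nonempty →
    ¬(H.V = G.V ∧ H.E = G.E) → H.density < G.density

/-- The subhypergraph of `G` induced on the vertex set `S`. -/
def restrict {s : ℕ} (G : SUnifHypergraph s) (S : Finset ℕ) : SUnifHypergraph s where
  V := G.V ∩ S
  E := G.E.filter (fun e => e ⊆ S)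
  card_edges := fun e he => G.card_edges e (Finset.mem_filter.mp he).1
  edges_sub := fun e he a ha => Finset.mem_inter.mpr
    ⟨G.edges_sub e (Finset.mem_filter.mp he).1 ha, (Finset.mem_filter.mp he).2 ha⟩

/-- A cycle `(v 0, e 0, v 1, e 1, …, v (m-1), e (m-1), v m = v 0)` in `G`. -/
def IsCycle {s : ℕ} (G : SUnifHypergraph s) (m : ℕ) (v : ℕ → ℕ) (e : ℕ → Finset ℕ) : Prop :=
  0 < m ∧ v m = v 0 ∧ e m = e 0 ∧
  (∀ i < m, e i ∈ G.E) ∧ (∀ i < m, v i ∈ G.V) ∧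
  (∀ i < m, v i ≠ v (i + 1)) ∧ (∀ i < m, e i ≠ e (i + 1)) ∧
  (∀ i < m, v i ∈ e i ∧ v (i + 1) ∈ e i)

/-- `G` is connected: it is nonempty and any two vertices are joined by a
chain of edges. -/
def Connected {s : ℕ} (G : SUnifHypergraph s) : Prop :=
  G.V.Nonempty ∧ ∀ u ∈ G.V, ∀ w ∈ G.V,
    Relation.ReflTransGen (fun a b => ∃ e ∈ G.E, a ∈ e ∧ b ∈ e) u w

/-- A tree is a connected hypergraph without cycles. -/
def IsTree {s : ℕ} (G : SUnifHypergraph s) : Prop :=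
  G.Connected ∧ ¬ ∃ m v e, G.IsCycle m v e

/-- For a rooted pair: number of nonroot vertices minus `α` times the number of
edges with at least one nonroot vertex, for roots `S` in the hypergraph `K`. -/
noncomputable def exVal {s : ℕ} (α : ℝ) (S : Finset ℕ) (K : SUnifHypergraph s) : ℝ :=
  ((K.V \ S).card : ℝ) - ((K.E.filter (fun f => ¬ f ⊆ S)).card : ℝ) * α

/-- The rooted hypergraph `(S, K)` is dense: `v - e·α < 0`. -/
noncomputable def IsDense {s : ℕ} (α : ℝ) (S : Finset ℕ) (K : SUnifHypergraph s) : Prop :=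
  exVal α S K < 0

/-- The rooted hypergraph `(S, K)` is sparse: `v - e·α > 0`. -/
noncomputable def IsSparse {s : ℕ} (α : ℝ) (S : Finset ℕ) (K : SUnifHypergraph s) : Prop :=
  0 < exVal α S K

/-- `(R, K)` is rigid: every nailextension `(S, K)` with `R ⊆ S ⊊ V(K)` is dense. -/
noncomputable def Rigid {s : ℕ} (α : ℝ) (R : Finset ℕ) (K : SUnifHypergraph s) : Prop :=
  ∀ S : Finset ℕ, R ⊆ S → S ⊂ K.V → IsDense α S K

/-- `(R, K)` is safe: every subextension `(R, K|_S)` with `R ⊊ S ⊆ V(K)` is sparse. -/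
noncomputable def Safe {s : ℕ} (α : ℝ) (R : Finset ℕ) (K : SUnifHypergraph s) : Prop :=
  ∀ S : Finset ℕ, R ⊂ S → S ⊆ K.V → IsSparse α R (K.restrict S)

/-- `(R, K)` is minimally safe: safe, with no safe nailextension. -/
noncomputable def MinimallySafe {s : ℕ} (α : ℝ) (R : Finset ℕ) (K : SUnifHypergraph s) : Prop :=
  Safe α R K ∧ ¬ ∃ S : Finset ℕ, R ⊂ S ∧ S ⊂ K.V ∧ Safe α S K

/-- A rigid `t`-chain `x 0 ⊆ x 1 ⊆ … ⊆ x k` in `G`: each step adds at most `t`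
vertices and each `(x i, G|_{x (i+1)})` is rigid. -/
noncomputable def IsRigidChain {s : ℕ} (α : ℝ) (G : SUnifHypergraph s) (t k : ℕ)
    (x : ℕ → Finset ℕ) : Prop :=
  (∀ i < k, x i ⊆ x (i + 1)) ∧ (∀ i < k, (x (i + 1) \ x i).card ≤ t) ∧
  (∀ i ≤ k, x i ⊆ G.V) ∧ (∀ i < k, Rigid α (x i) (G.restrict (x (i + 1))))

/-- `C` is the `t`-closure of `X` in `G`: it is the endpoint of a rigid
`t`-chain starting at `X` and contains the endpoint of every such chain. -/
noncomputable def IsTClosure {s : ℕ} (α : ℝ) (G : SUnifHypergraph s) (t : ℕ)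
    (X C : Finset ℕ) : Prop :=
  (∃ k x, IsRigidChain α G t k x ∧ x 0 = X ∧ x k = C) ∧
  ∀ k' x', IsRigidChain α G t k' x' → x' 0 = X → x' k' ⊆ C

end SUnifHypergraph

open SUnifHypergraph

/-- The possible edges of an `s`-uniform hypergraph on `Fin n`. -/
def edgeCandidates (s n : ℕ) : Finset (Finset (Fin n)) :=
  Finset.univ.filter (fun e => e.card = s)

/-- The probability of the event `A` under the binomial random `s`-uniform
hypergraph `G^s(n,p)`: each of the `C(n,s)` possible edges appears
independently with probability `p`. -/
noncomputable def hyperProb (s n : ℕ) (p : ℝ) (A : Set (Finset (Finset (Fin n)))) : ℝ :=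
  ∑ E ∈ (edgeCandidates s n).powerset,
    if E ∈ A then p ^ E.card * (1 - p) ^ ((edgeCandidates s n).card - E.card) else 0

/-- The `s`-uniform hypergraph on vertex set `{0,…,n-1}` determined by an
edge set over `Fin n`. -/
noncomputable def ofEdges (s n : ℕ) (E : Finset (Finset (Fin n))) : SUnifHypergraph s where
  V := Finset.range n
  E := (E.filter (fun e => e.card = s)).image (fun e => e.image Fin.val)
  card_edges := by
    intro f hf
    simp only [Finset.mem_image, Finset.mem_filter] at hf
    obtain ⟨e, ⟨_, hcard⟩, rfl⟩ := hf
    rw [Finset.card_image_of_injective _ Fin.val_injective]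
    exact hcard
  edges_sub := by
    intro f hf a ha
    simp only [Finset.mem_image, Finset.mem_filter] at hf
    obtain ⟨e, _, rfl⟩ := hf
    simp only [Finset.mem_image] at ha
    obtain ⟨b, _, rfl⟩ := ha
    exact Finset.mem_range.mpr b.isLt


section StmtTwoAux

open Finset

private lemma stmt2_sdiff_insert_split (E F : Finset (Finset ℕ)) (e : Finset ℕ) (heE : e ∈ E)
    (hF : F ⊆ E.erase e) : E \ F = insert e ((E.erase e) \ F) := by
  have heF : e ∉ F := fun h => (Finset.mem_erase.mp (hF h)).1 rfl
  ext x
  simp only [Finset.mem_sdiff, Finset.mem_insert, Finset.mem_erase]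
  constructor
  · rintro ⟨hx, hx2⟩
    by_cases hxe : x = e
    · left; exact hxe
    · right; exact ⟨⟨hxe, hx⟩, hx2⟩
  · rintro (rfl | ⟨⟨_, hx⟩, hx2⟩)
    · exact ⟨heE, heF⟩
    · exact ⟨hx, hx2⟩

private lemma stmt2_lemR (s : ℕ) (E : Finset (Finset ℕ)) (hcard : ∀ e ∈ E, e.card = s) :
    ∀ W : Finset ℕ,
      (∀ F ⊆ E, F.Nonempty → ((F.biUnion id) ∩ (W ∪ (E \ F).biUnion id)).Nonempty) →
      (W ∪ E.biUnion id).card ≤ W.card + E.card * (s - 1) := by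
  induction E using Finset.strongInduction with
  | _ E ih =>
  intro W hcond
  rcases E.eq_empty_or_nonempty with rfl | hE
  · simp
  have h1 := hcond E (subset_refl E) hE
  rw [Finset.sdiff_self] at h1
  simp only [Finset.biUnion_empty, Finset.union_empty] at h1
  obtain ⟨v, hv⟩ := h1
  rw [Finset.mem_inter] at hv
  obtain ⟨hv1, hv2⟩ := hv
  rw [Finset.mem_biUnion] at hv1
  obtain ⟨e, heE, hve⟩ := hv1
  have hsub : E.erase e ⊂ E := Finset.erase_ssubset heE
  have hcond' : ∀ F ⊆ E.erase e, F.Nonempty →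
      ((F.biUnion id) ∩ ((W ∪ e) ∪ ((E.erase e) \ F).biUnion id)).Nonempty := by
    intro F hF hFne
    have hFE : F ⊆ E := hF.trans (Finset.erase_subset _ _)
    have hsplit := stmt2_sdiff_insert_split E F e heE hF
    have h2 := hcond F hFE hFne
    rw [hsplit, Finset.biUnion_insert] at h2
    simpa [Finset.union_assoc, id] using h2
  have hrec := ih (E.erase e) hsub (fun f hf => hcard f (Finset.erase_subset _ _ hf))
    (W ∪ e) hcond'
  have hunion : W ∪ E.biUnion id = (W ∪ e) ∪ (E.erase e).biUnion id := by
    conv_lhs => rw [← Finset.insert_erase heE]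
    rw [Finset.biUnion_insert, Finset.union_assoc]
    rfl
  have hWe : (W ∪ e).card ≤ W.card + (s - 1) := by
    have h3 : (e \ W).card + W.card = (e ∪ W).card := Finset.card_sdiff_add_card e W
    have h4 : (e ∩ W).card + (e \ W).card = e.card := Finset.card_inter_add_card_sdiff e W
    have h5 : 1 ≤ (e ∩ W).card := Finset.card_pos.mpr ⟨v, Finset.mem_inter.mpr ⟨hve, hv2⟩⟩
    have h6 : e.card = s := hcard e heE
    have h7 : (W ∪ e) = (e ∪ W) := Finset.union_comm _ _
    rw [h7]
    omega
  have hc : E.card = (E.erase e).card + 1 := (Finset.card_erase_add_one heE).symm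
  rw [hunion]
  calc ((W ∪ e) ∪ (E.erase e).biUnion id).card
      ≤ (W ∪ e).card + (E.erase e).card * (s - 1) := hrec
    _ ≤ W.card + (s - 1) + (E.erase e).card * (s - 1) := by omega
    _ = W.card + E.card * (s - 1) := by rw [hc]; ring

private lemma stmt2_conn_bound (s : ℕ) (hs : 1 ≤ s) (E : Finset (Finset ℕ)) (hE : E.Nonempty)
    (hcard : ∀ e ∈ E, e.card = s)
    (hconn : ∀ F ⊆ E, F.Nonempty → F ≠ E →
      ((F.biUnion id) ∩ ((E \ F).biUnion id)).Nonempty) :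
    (E.biUnion id).card ≤ 1 + E.card * (s - 1) := by
  obtain ⟨e0, he0⟩ := hE
  have hcond' : ∀ F ⊆ E.erase e0, F.Nonempty →
      ((F.biUnion id) ∩ (e0 ∪ ((E.erase e0) \ F).biUnion id)).Nonempty := by
    intro F hF hFne
    have hFE : F ⊆ E := hF.trans (Finset.erase_subset _ _)
    have hne : F ≠ E := by
      intro h
      exact (Finset.mem_erase.mp (hF (h ▸ he0))).1 rfl
    have h2 := hconn F hFE hFne hne
    rw [stmt2_sdiff_insert_split E F e0 he0 hF, Finset.biUnion_insert] at h2
    simpa [id] using h2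
  have hrec := stmt2_lemR s (E.erase e0) (fun f hf => hcard f (Finset.erase_subset _ _ hf))
    e0 hcond'
  have hunion : E.biUnion id = e0 ∪ (E.erase e0).biUnion id := by
    conv_lhs => rw [← Finset.insert_erase he0]
    rw [Finset.biUnion_insert]
    rfl
  have hc : E.card = (E.erase e0).card + 1 := (Finset.card_erase_add_one he0).symm
  have h6 : e0.card = s := hcard e0 he0
  rw [hunion]
  calc (e0 ∪ (E.erase e0).biUnion id).card
      ≤ e0.card + (E.erase e0).card * (s - 1) := hrec
    _ = s + (E.erase e0).card * (s - 1) := by rw [h6]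
    _ ≤ 1 + E.card * (s - 1) := by rw [hc]; have : s - 1 + 1 = s := by omega
                                   nlinarith [Nat.le_refl ((E.erase e0).card * (s-1))]

private lemma stmt2_forward (s : ℕ) (hs : 2 ≤ s) (G : SUnifHypergraph s) (hSB : G.StrictlyBalanced)
    (h0 : 0 < G.density) (h1 : G.density < 1 / ((s:ℚ) - 1)) :
    ∃ k : ℕ, 0 < k ∧ G.density = (k : ℚ) / (1 + (k:ℚ) * ((s:ℚ)-1)) := by
  classical
  set n := G.V.card with hn
  set k := G.E.card with hk
  have hnpos : 0 < n := Finset.card_pos.mpr hSB.1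
  have hdens : G.density = (k:ℚ)/(n:ℚ) := rfl
  have hkpos : 0 < k := by
    by_contra h
    have hk0 : k = 0 := by omega
    rw [hdens, hk0] at h0
    simp at h0
  obtain ⟨e0, he0⟩ := Finset.card_pos.mp hkpos
  have hedgene : ∀ g ∈ G.E, g.Nonempty := by
    intro g hg
    rw [← Finset.card_pos, G.card_edges g hg]; omega
  set U := G.E.biUnion id with hU
  have hUV : U ⊆ G.V := by
    intro x hx; rw [Finset.mem_biUnion] at hx; obtain ⟨e, he, hxe⟩ := hx
    exact G.edges_sub e he hxe
  have hUne : U.Nonempty := by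
    obtain ⟨x0, hx0⟩ := hedgene e0 he0
    exact ⟨x0, Finset.mem_biUnion.mpr ⟨e0, he0, hx0⟩⟩
  -- the restrict of a "closed" edge family
  have hrestr : ∀ F ⊆ G.E, (∀ g ∈ G.E \ F, (g ∩ F.biUnion id) = ∅) →
      (G.restrict (F.biUnion id)).E = F := by
    intro F hFE hdisj
    ext g
    simp only [SUnifHypergraph.restrict, Finset.mem_filter]
    constructor
    · rintro ⟨hg, hgsub⟩
      by_contra hgF
      have h1 := hdisj g (Finset.mem_sdiff.mpr ⟨hg, hgF⟩)
      obtain ⟨x, hx⟩ := hedgene g hg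
      have : x ∈ g ∩ F.biUnion id := Finset.mem_inter.mpr ⟨hx, hgsub hx⟩
      rw [h1] at this; exact absurd this (Finset.notMem_empty x)
    · intro hg
      exact ⟨hFE hg, Finset.subset_biUnion_of_mem id hg⟩
  -- step a : U = G.V
  have hUeq : U = G.V := by
    by_contra hne
    have hHV : (G.restrict U).V = U := Finset.inter_eq_right.mpr hUV
    have hHE : (G.restrict U).E = G.E := by
      apply hrestr G.E (subset_refl _)
      intro g hg
      exact absurd (Finset.mem_sdiff.mp hg).1 ((Finset.mem_sdiff.mp hg).2)
    have hlt := hSB.2 (G.restrict U) (by rw [hHV]; exact hUV) (by rw [hHE]) (by rw [hHV]; exact hUne)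
      (by rintro ⟨h1', _⟩; exact hne (hHV ▸ h1'))
    have hUcard : U.card ≤ n := Finset.card_le_card hUV
    have hUpos : 0 < U.card := Finset.card_pos.mpr hUne
    have hHd : (G.restrict U).density = (k:ℚ)/(U.card:ℚ) := by
      rw [SUnifHypergraph.density, hHE, hHV, hk]
    rw [hHd, hdens] at hlt
    have hge : (k:ℚ)/(n:ℚ) ≤ (k:ℚ)/(U.card:ℚ) := by
      apply div_le_div_of_nonneg_left (by positivity) (by exact_mod_cast hUpos)
      exact_mod_cast hUcard
    linarith
  -- step b : no split
  have hnosplit : ∀ F ⊆ G.E, F.Nonempty → F ≠ G.E →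
      ((F.biUnion id) ∩ ((G.E \ F).biUnion id)).Nonempty := by
    intro F hFE hFne hFneq
    by_contra hdisj
    rw [Finset.not_nonempty_iff_eq_empty] at hdisj
    set A := F.biUnion id with hA
    set F' := G.E \ F with hF'
    set B := F'.biUnion id with hB
    have hF'ne : F'.Nonempty := by
      rw [hF', Finset.sdiff_nonempty]
      intro h
      exact hFneq (Finset.Subset.antisymm hFE h)
    have hABdisj : ∀ x, x ∈ A → x ∈ B → False := by
      intro x hxA hxB
      have : x ∈ A ∩ B := Finset.mem_inter.mpr ⟨hxA, hxB⟩
      rw [hdisj] at this; exact absurd this (Finset.notMem_empty x)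
    have hAV : A ⊆ G.V := fun x hx => by
      rw [Finset.mem_biUnion] at hx; obtain ⟨e, he, hxe⟩ := hx
      exact G.edges_sub e (hFE he) hxe
    have hBV : B ⊆ G.V := fun x hx => by
      rw [Finset.mem_biUnion] at hx; obtain ⟨e, he, hxe⟩ := hx
      exact G.edges_sub e ((Finset.sdiff_subset) he) hxe
    have hAne : A.Nonempty := by
      obtain ⟨f, hf⟩ := hFne
      obtain ⟨x, hx⟩ := hedgene f (hFE hf)
      exact ⟨x, Finset.mem_biUnion.mpr ⟨f, hf, hx⟩⟩
    have hBne : B.Nonempty := by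
      obtain ⟨f, hf⟩ := hF'ne
      obtain ⟨x, hx⟩ := hedgene f ((Finset.sdiff_subset) hf)
      exact ⟨x, Finset.mem_biUnion.mpr ⟨f, hf, hx⟩⟩
    -- H1
    have hE1 : (G.restrict A).E = F := by
      apply hrestr F hFE
      intro g hg
      apply Finset.eq_empty_of_forall_notMem
      intro x hx
      rw [Finset.mem_inter] at hx
      have hgB : x ∈ B := Finset.mem_biUnion.mpr ⟨g, hg, hx.1⟩
      exact hABdisj x hx.2 hgB
    have hV1 : (G.restrict A).V = A := Finset.inter_eq_right.mpr hAV
    have hne1 : (G.restrict A).V ≠ G.V := by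
      rw [hV1]
      intro h
      obtain ⟨b, hb⟩ := hBne
      exact hABdisj b (h ▸ hBV hb) hb
    have hlt1 := hSB.2 (G.restrict A) (by rw [hV1]; exact hAV) (by rw [hE1]; exact hFE) (by rw [hV1]; exact hAne)
      (fun h => hne1 h.1)
    -- H2
    have hFF' : G.E \ F' = F := by
      rw [hF']; exact Finset.sdiff_sdiff_eq_self hFE
    have hE2 : (G.restrict B).E = F' := by
      apply hrestr F' (Finset.sdiff_subset)
      intro g hg
      rw [hFF'] at hg
      apply Finset.eq_empty_of_forall_notMem
      intro x hx
      rw [Finset.mem_inter] at hx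
      have hgA : x ∈ A := Finset.mem_biUnion.mpr ⟨g, hg, hx.1⟩
      exact hABdisj x hgA hx.2
    have hV2 : (G.restrict B).V = B := Finset.inter_eq_right.mpr hBV
    have hne2 : (G.restrict B).V ≠ G.V := by
      rw [hV2]
      intro h
      obtain ⟨a, ha⟩ := hAne
      exact hABdisj a ha (h ▸ hAV ha)
    have hlt2 := hSB.2 (G.restrict B) (by rw [hV2]; exact hBV) (by rw [hE2]; exact Finset.sdiff_subset) (by rw [hV2]; exact hBne)
      (fun h => hne2 h.1)
    -- combine
    have hd1 : (G.restrict A).density = (F.card:ℚ)/(A.card:ℚ) := by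
      rw [SUnifHypergraph.density, hE1, hV1]
    have hd2 : (G.restrict B).density = (F'.card:ℚ)/(B.card:ℚ) := by
      rw [SUnifHypergraph.density, hE2, hV2]
    rw [hd1, hdens] at hlt1
    rw [hd2, hdens] at hlt2
    have hApos : (0:ℚ) < A.card := by exact_mod_cast Finset.card_pos.mpr hAne
    have hBpos : (0:ℚ) < B.card := by exact_mod_cast Finset.card_pos.mpr hBne
    have hnpos' : (0:ℚ) < n := by exact_mod_cast hnpos
    have h1' : (F.card:ℚ) * n < k * A.card := by
      have := (div_lt_div_iff₀ hApos hnpos').mp hlt1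
      linarith
    have h2' : (F'.card:ℚ) * n < k * B.card := by
      have := (div_lt_div_iff₀ hBpos hnpos').mp hlt2
      linarith
    have hcards : F.card + F'.card = k := by
      rw [hF', hk, add_comm]
      exact Finset.card_sdiff_add_card_eq_card hFE
    have hAB : A ∪ B = G.V := by
      rw [← hUeq, hU, hA, hB, hF']
      ext x
      simp only [Finset.mem_union, Finset.mem_biUnion, Finset.mem_sdiff, id]
      constructor
      · rintro (⟨e, he, hx⟩ | ⟨e, he, hx⟩)
        · exact ⟨e, hFE he, hx⟩
        · exact ⟨e, he.1, hx⟩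
      · rintro ⟨e, he, hx⟩
        by_cases hF : e ∈ F
        · exact Or.inl ⟨e, hF, hx⟩
        · exact Or.inr ⟨e, ⟨he, hF⟩, hx⟩
    have hABcard : A.card + B.card = n := by
      rw [hn, ← hAB, Finset.card_union_of_disjoint]
      rw [Finset.disjoint_left]
      intro x hx hx'
      exact hABdisj x hx hx'
    have : (k:ℚ) * n < k * n := by
      have e1 : ((F.card:ℚ) + F'.card) * n < k * (A.card + B.card) := by ring_nf; nlinarith
      have e2 : ((F.card:ℚ) + F'.card) = k := by exact_mod_cast hcards
      have e3 : ((A.card:ℚ) + B.card) = n := by exact_mod_cast hABcard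
      rw [e2, e3] at e1
      exact e1
    linarith
  -- step c
  have hub : n ≤ 1 + k * (s - 1) := by
    have := stmt2_conn_bound s (by omega) G.E ⟨e0, he0⟩ G.card_edges hnosplit
    rw [← hU, hUeq, ← hn, ← hk] at this
    exact this
  have hlb : k * (s - 1) < n := by
    have hs1 : ((s:ℚ) - 1) = ((s-1 : ℕ) : ℚ) := by
      push_cast [Nat.cast_sub (by omega : 1 ≤ s)]; ring
    rw [hdens, hs1] at h1
    have hspos : (0:ℚ) < ((s-1:ℕ):ℚ) := by
      have : 1 ≤ s - 1 := by omega
      exact_mod_cast Nat.lt_of_lt_of_le Nat.zero_lt_one this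
    have hnpos' : (0:ℚ) < n := by exact_mod_cast hnpos
    have := (div_lt_div_iff₀ hnpos' hspos).mp h1
    have : (k:ℚ) * ((s-1:ℕ):ℚ) < n := by linarith
    exact_mod_cast this
  have hneq : n = 1 + k * (s - 1) := by omega
  refine ⟨k, hkpos, ?_⟩
  rw [hdens, hneq]
  congr 1
  push_cast [Nat.cast_sub (by omega : 1 ≤ s)]
  ring

private lemma stmt2_backward (s : ℕ) (hs : 2 ≤ s) (k : ℕ) (hk : 0 < k) :
    ∃ G : SUnifHypergraph s, G.StrictlyBalanced ∧
      G.density = (k:ℚ)/(1+(k:ℚ)*((s:ℚ)-1)) := by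
  classical
  set t := s - 1 with ht
  have htpos : 0 < t := by omega
  set ed : ℕ → Finset ℕ := fun i => insert 0 (Finset.Ico (i*t+1) (i*t+t+1)) with hed
  have h0Ico : ∀ i, 0 ∉ Finset.Ico (i*t+1) (i*t+t+1) := by
    intro i h
    have := (Finset.mem_Ico.mp h).1
    omega
  have hedcard : ∀ i, (ed i).card = s := by
    intro i
    rw [hed]
    rw [Finset.card_insert_of_notMem (h0Ico i), Nat.card_Ico]
    omega
  have hedsub : ∀ i < k, ed i ⊆ Finset.range (k*t+1) := by
    intro i hi x hx
    rw [hed] at hx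
    rcases Finset.mem_insert.mp hx with rfl | hx
    · exact Finset.mem_range.mpr (by omega)
    · have h1 := Finset.mem_Ico.mp hx
      have h2 : (i+1)*t ≤ k*t := Nat.mul_le_mul_right t (by omega)
      rw [Finset.mem_range]
      nlinarith [h1.1, h1.2]
  have hedinj : ∀ i j, ed i = ed j → i = j := by
    have key : ∀ i j, ed i = ed j → j ≤ i := by
      intro i j h
      have h1 : i*t+1 ∈ ed i := by
        rw [hed]; exact Finset.mem_insert_of_mem (Finset.mem_Ico.mpr ⟨le_refl _, by omega⟩)
      rw [h, hed] at h1
      rcases Finset.mem_insert.mp h1 with h2 | h2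
      · omega
      · have := (Finset.mem_Ico.mp h2).1
        by_contra hc
        push_neg at hc
        have : (i+1)*t < j * t := by nlinarith
        nlinarith
    intro i j h
    exact le_antisymm (key j i h.symm) (key i j h)
  have hIcodisj : ∀ i j, i ≠ j →
      Disjoint (Finset.Ico (i*t+1) (i*t+t+1)) (Finset.Ico (j*t+1) (j*t+t+1)) := by
    intro i j hij
    rw [Finset.disjoint_left]
    intro x hx hx'
    rw [Finset.mem_Ico] at hx hx'
    rcases Nat.lt_or_ge i j with h | h
    · have : (i+1)*t ≤ j*t := Nat.mul_le_mul_right t (by omega)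
      nlinarith [hx.1, hx.2, hx'.1, hx'.2]
    · have hij' : j < i := by omega
      have : (j+1)*t ≤ i*t := Nat.mul_le_mul_right t (by omega)
      nlinarith [hx.1, hx.2, hx'.1, hx'.2]
  set G : SUnifHypergraph s := {
    V := Finset.range (k*t+1)
    E := (Finset.range k).image ed
    card_edges := by
      intro e he
      obtain ⟨i, _, rfl⟩ := Finset.mem_image.mp he
      exact hedcard i
    edges_sub := by
      intro e he
      obtain ⟨i, hi, rfl⟩ := Finset.mem_image.mp he
      exact hedsub i (Finset.mem_range.mp hi) } with hG
  have hGV : G.V = Finset.range (k*t+1) := rfl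
  have hGE : G.E = (Finset.range k).image ed := rfl
  have hEcard : G.E.card = k := by
    rw [hGE, Finset.card_image_of_injective _ (fun a b h => hedinj a b h), Finset.card_range]
  have hVcard : G.V.card = k*t+1 := by rw [hGV, Finset.card_range]
  have hGdens : G.density = (k:ℚ)/((k*t+1 : ℕ) : ℚ) := by
    rw [SUnifHypergraph.density, hEcard, hVcard]
  have hcast : ((k*t+1 : ℕ) : ℚ) = 1 + (k:ℚ)*((s:ℚ)-1) := by
    push_cast [ht, Nat.cast_sub (by omega : 1 ≤ s)]
    ring
  have hcover : G.V ⊆ (Finset.range k).biUnion ed := by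
    intro v hv
    rw [hGV, Finset.mem_range] at hv
    rcases Nat.eq_zero_or_pos v with rfl | hvpos
    · exact Finset.mem_biUnion.mpr ⟨0, Finset.mem_range.mpr hk,
        by rw [hed]; exact Finset.mem_insert_self 0 _⟩
    · set i := (v-1)/t with hi
      have h1 : i*t ≤ v-1 := by rw [hi]; exact Nat.div_mul_le_self _ _
      have h2 : v-1 < i*t + t := by
        have hm := Nat.div_add_mod (v-1) t
        have hm2 := Nat.mod_lt (v-1) htpos
        have : i * t = t * ((v-1)/t) := by rw [hi, Nat.mul_comm]
        omega
      have h3 : i < k := by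
        by_contra hc
        push_neg at hc
        have : k*t ≤ i*t := Nat.mul_le_mul_right t hc
        omega
      refine Finset.mem_biUnion.mpr ⟨i, Finset.mem_range.mpr h3, ?_⟩
      rw [hed]
      exact Finset.mem_insert_of_mem (Finset.mem_Ico.mpr ⟨by omega, by omega⟩)
  refine ⟨G, ⟨⟨0, by rw [hGV]; exact Finset.mem_range.mpr (by omega)⟩, ?_⟩, by rw [hGdens, hcast]⟩
  intro H hHV hHE hHVne hne
  set I := (Finset.range k).filter (fun i => ed i ∈ H.E) with hI
  have hHEI : H.E = I.image ed := by
    ext g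
    constructor
    · intro hg
      obtain ⟨i, hi, rfl⟩ := Finset.mem_image.mp (hHE hg)
      exact Finset.mem_image.mpr ⟨i, Finset.mem_filter.mpr ⟨hi, hg⟩, rfl⟩
    · intro hg
      obtain ⟨i, hi, rfl⟩ := Finset.mem_image.mp hg
      exact (Finset.mem_filter.mp hi).2
  have hHEcard : H.E.card = I.card := by
    rw [hHEI, Finset.card_image_of_injective _ (fun a b h => hedinj a b h)]
  have hGdpos : 0 < G.density := by
    rw [hGdens]
    positivity
  rcases I.eq_empty_or_nonempty with hIe | hIne
  · have : H.E.card = 0 := by rw [hHEcard, hIe]; rfl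
    rw [SUnifHypergraph.density, this]
    simpa using hGdpos
  · set j := I.card with hj
    have hjpos : 0 < j := Finset.card_pos.mpr hIne
    have hjk : j ≤ k := by
      rw [hj, hI]
      calc I.card ≤ (Finset.range k).card := Finset.card_le_card (Finset.filter_subset _ _)
        _ = k := Finset.card_range k
    -- lower bound on H.V.card
    have hLsub : insert 0 (I.biUnion (fun i => Finset.Ico (i*t+1) (i*t+t+1))) ⊆ H.V := by
      obtain ⟨i0, hi0⟩ := hIne
      intro x hx
      rcases Finset.mem_insert.mp hx with rfl | hx
      · have : ed i0 ∈ H.E := (Finset.mem_filter.mp hi0).2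
        exact H.edges_sub _ this (by rw [hed]; exact Finset.mem_insert_self 0 _)
      · obtain ⟨i, hi, hxi⟩ := Finset.mem_biUnion.mp hx
        have : ed i ∈ H.E := (Finset.mem_filter.mp hi).2
        exact H.edges_sub _ this (by rw [hed]; exact Finset.mem_insert_of_mem hxi)
    have hLcard : (insert 0 (I.biUnion (fun i => Finset.Ico (i*t+1) (i*t+t+1)))).card
        = 1 + j * t := by
      rw [Finset.card_insert_of_notMem, Finset.card_biUnion]
      · simp only [Nat.card_Ico]
        rw [Finset.sum_congr rfl (fun i _ => by omega : ∀ i ∈ I, i*t+t+1 - (i*t+1) = t)]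
        rw [Finset.sum_const, smul_eq_mul, hj]
        omega
      · intro a _ b _ hab
        exact hIcodisj a b hab
      · intro h
        obtain ⟨i, _, hxi⟩ := Finset.mem_biUnion.mp h
        exact h0Ico i hxi
    have hHVlb : 1 + j * t ≤ H.V.card := by
      rw [← hLcard]
      exact Finset.card_le_card hLsub
    rcases Nat.lt_or_ge j k with hjlt | hjge
    · -- proper subfamily
      have hHd : H.density = (j:ℚ)/(H.V.card:ℚ) := by
        rw [SUnifHypergraph.density, hHEcard, hj]
      rw [hHd, hGdens]
      have hHVpos : (0:ℚ) < (H.V.card:ℚ) := by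
        exact_mod_cast Finset.card_pos.mpr hHVne
      have hp1 : (0:ℚ) < ((1+j*t:ℕ):ℚ) := by exact_mod_cast (by omega : 0 < 1+j*t)
      have hp2 : (0:ℚ) < ((k*t+1:ℕ):ℚ) := by exact_mod_cast (by omega : 0 < k*t+1)
      have step1 : (j:ℚ)/(H.V.card:ℚ) ≤ (j:ℚ)/((1+j*t : ℕ):ℚ) := by
        apply div_le_div_of_nonneg_left (Nat.cast_nonneg j) hp1
        exact_mod_cast hHVlb
      have step2 : (j:ℚ)/((1+j*t:ℕ):ℚ) < (k:ℚ)/((k*t+1:ℕ):ℚ) := by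
        rw [div_lt_div_iff₀ hp1 hp2]
        push_cast
        nlinarith [htpos, hjlt, (by exact_mod_cast Nat.cast_lt.mpr hjlt : (j:ℚ) < k),
          (by exact_mod_cast Nat.cast_pos.mpr htpos : (0:ℚ) < t)]
      linarith
    · -- j = k : H = G, contradiction
      exfalso
      have hIeq : I = Finset.range k := by
        apply Finset.eq_of_subset_of_card_le (by rw [hI]; exact Finset.filter_subset _ _)
        rw [Finset.card_range, ← hj]; exact hjge
      have hHEeq : H.E = G.E := by rw [hHEI, hIeq, hGE]
      have hHVeq : H.V = G.V := by
        apply Finset.Subset.antisymm hHV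
        intro v hv
        obtain ⟨i, hi, hvi⟩ := Finset.mem_biUnion.mp (hcover hv)
        have : ed i ∈ H.E := by
          rw [hHEeq, hGE]
          exact Finset.mem_image.mpr ⟨i, hi, rfl⟩
        exact H.edges_sub _ this hvi
      exact hne ⟨hHVeq, hHEeq⟩

end StmtTwoAux

/-- For `s ≥ 2` and rational `0 < ρ < 1/(s-1)`, a strictly
balanced `s`-uniform hypergraph with density `ρ` exists iff
`ρ = k/(1 + k(s-1))` for some positive integer `k`. -/
theorem stmt2 (s : ℕ) (hs : 2 ≤ s) (ρ : ℚ) (h0 : 0 < ρ)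
    (h1 : ρ < 1 / ((s : ℚ) - 1)) :
    (∃ G : SUnifHypergraph s, G.StrictlyBalanced ∧ G.density = ρ) ↔
      ∃ k : ℕ, 0 < k ∧ ρ = (k : ℚ) / (1 + (k : ℚ) * ((s : ℚ) - 1)) := by
  constructor
  · rintro ⟨G, hSB, hd⟩
    obtain ⟨k, hk, hk2⟩ := stmt2_forward s hs G hSB (hd ▸ h0) (hd ▸ h1)
    exact ⟨k, hk, hd ▸ hk2⟩
  · rintro ⟨k, hk, rfl⟩
    obtain ⟨G, hSB, hd⟩ := stmt2_backward s hs k hk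
    exact ⟨G, hSB, hd⟩
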